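/- arXiv:2306.07024 — 5 statements merged into one kernel-verified Lean document; each statement's English description precedes it below -/
import Mathlib

section
/- Let (Ω, m, μ) be a probability space, let 𝒢 ≤ ℱ ≤ m be sub-σ-algebras, let Z : Ω → ℝ be ℱ-measurable and square-integrable, and let ε : Ω → ℝ be square-integrable and independent of the σ-algebra ℱ. Set Y = Z + ε. Then E[(E[Y|ℱ] − E[Y|𝒢])²] = E[(Z − E[Z|𝒢])²]. -/
open MeasureTheory ProbabilityTheory

/-- In the additive-noise model `Y = Z + ε` with `Z` being `ℱ`-measurable and `ε` independent
of `ℱ`, the exogenous noise drops out of the test statistic: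
`E[(E[Y|ℱ] − E[Y|𝒢])²] = E[(Z − E[Z|𝒢])²]`. -/
theorem drcfs_stmt8 {Ω : Type*} {m : MeasurableSpace Ω} (μ : Measure Ω) [IsProbabilityMeasure μ]
    (𝒢 ℱ : MeasurableSpace Ω) (h𝒢ℱ : 𝒢 ≤ ℱ) (hℱm : ℱ ≤ m)
    (Z : Ω → ℝ) (hZmeas : StronglyMeasurable[ℱ] Z) (hZ2 : MemLp Z 2 μ)
    (ε : Ω → ℝ) (hε2 : MemLp ε 2 μ)
    (hindep : Indep (MeasurableSpace.comap ε inferInstance) ℱ μ)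
    (Y : Ω → ℝ) (hYdef : Y = fun ω => Z ω + ε ω) :
    ∫ ω, ((μ[Y|ℱ]) ω - (μ[Y|𝒢]) ω) ^ 2 ∂μ = ∫ ω, (Z ω - (μ[Z|𝒢]) ω) ^ 2 ∂μ := by
  have h𝒢m : 𝒢 ≤ m := h𝒢ℱ.trans hℱm
  have hZint : Integrable Z μ := hZ2.integrable one_le_two
  have hεint : Integrable ε μ := hε2.integrable one_le_two
  -- a measurable modification of ε
  set ε' : Ω → ℝ := hε2.aestronglyMeasurable.mk ε with hε'def
  have hε'sm : StronglyMeasurable[m] ε' := hε2.aestronglyMeasurable.stronglyMeasurable_mk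
  have hεε' : ε =ᵐ[μ] ε' := hε2.aestronglyMeasurable.ae_eq_mk
  -- independence transfers to ε'
  have hindep' : Indep (MeasurableSpace.comap ε' inferInstance) ℱ μ := by
    rw [Indep_iff]
    intro t1 t2 ht1 ht2
    obtain ⟨B, hB, rfl⟩ := ht1
    have hpre : ε' ⁻¹' B =ᵐ[μ] ε ⁻¹' B := by
      filter_upwards [hεε'] with ω hω
      show (ε' ω ∈ B) = (ε ω ∈ B)
      rw [hω]
    have h1 : μ (ε' ⁻¹' B ∩ t2) = μ (ε ⁻¹' B ∩ t2) :=
      measure_congr (hpre.inter (Filter.EventuallyEq.refl _ _))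
    have h2 : μ (ε' ⁻¹' B) = μ (ε ⁻¹' B) := measure_congr hpre
    rw [h1, h2]
    rw [Indep_iff] at hindep
    exact hindep _ _ ⟨B, hB, rfl⟩ ht2
  have hle₁ : MeasurableSpace.comap ε' inferInstance ≤ m := Measurable.comap_le hε'sm.measurable
  have hε'm : StronglyMeasurable[MeasurableSpace.comap ε' inferInstance] ε' :=
    (Measurable.of_comap_le le_rfl).stronglyMeasurable
  -- conditional expectations of ε
  have hεℱ : μ[ε|ℱ] =ᵐ[μ] fun _ => ∫ x, ε x ∂μ := by
    have h := condExp_indep_eq (μ := μ) hle₁ hℱm hε'm hindep'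
    have hi : (∫ x, ε' x ∂μ) = ∫ x, ε x ∂μ := integral_congr_ae hεε'.symm
    calc μ[ε|ℱ] =ᵐ[μ] μ[ε'|ℱ] := condExp_congr_ae hεε'
      _ =ᵐ[μ] fun _ => ∫ x, ε' x ∂μ := h
      _ = fun _ => ∫ x, ε x ∂μ := by simp [hi]
  have hindep'𝒢 : Indep (MeasurableSpace.comap ε' inferInstance) 𝒢 μ := by
    rw [Indep_iff] at hindep' ⊢
    exact fun t1 t2 ht1 ht2 => hindep' t1 t2 ht1 (h𝒢ℱ _ ht2)
  have hε𝒢 : μ[ε|𝒢] =ᵐ[μ] fun _ => ∫ x, ε x ∂μ := by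
    have h := condExp_indep_eq (μ := μ) hle₁ h𝒢m hε'm hindep'𝒢
    have hi : (∫ x, ε' x ∂μ) = ∫ x, ε x ∂μ := integral_congr_ae hεε'.symm
    calc μ[ε|𝒢] =ᵐ[μ] μ[ε'|𝒢] := condExp_congr_ae hεε'
      _ =ᵐ[μ] fun _ => ∫ x, ε' x ∂μ := h
      _ = fun _ => ∫ x, ε x ∂μ := by simp [hi]
  -- condexp of Y
  have hYℱ : μ[Y|ℱ] =ᵐ[μ] fun ω => Z ω + ∫ x, ε x ∂μ := by
    rw [hYdef]
    calc μ[fun ω => Z ω + ε ω|ℱ] =ᵐ[μ] μ[Z|ℱ] + μ[ε|ℱ] := condExp_add hZint hεint ℱ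
      _ =ᵐ[μ] fun ω => Z ω + ∫ x, ε x ∂μ := by
        have hZℱ : μ[Z|ℱ] = Z := condExp_of_stronglyMeasurable hℱm hZmeas hZint
        filter_upwards [hεℱ] with ω h2
        simp [hZℱ, h2]
  have hY𝒢 : μ[Y|𝒢] =ᵐ[μ] fun ω => (μ[Z|𝒢]) ω + ∫ x, ε x ∂μ := by
    rw [hYdef]
    calc μ[fun ω => Z ω + ε ω|𝒢] =ᵐ[μ] μ[Z|𝒢] + μ[ε|𝒢] := condExp_add hZint hεint 𝒢
      _ =ᵐ[μ] fun ω => (μ[Z|𝒢]) ω + ∫ x, ε x ∂μ := by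
        filter_upwards [hε𝒢] with ω h2
        simp [h2]
  refine integral_congr_ae ?_
  filter_upwards [hYℱ, hY𝒢] with ω h1 h2
  rw [h1, h2]
  ring
end

section
/- Let (Ω, m, μ) be a probability space, let 𝒢 ≤ ℱ ≤ m be sub-σ-algebras, let Z : Ω → ℝ be ℱ-measurable and square-integrable, and let ε : Ω → ℝ be square-integrable and independent of the σ-algebra ℱ. Set Y = Z + ε. Then E[(E[Y|ℱ] − E[Y|𝒢])²] = 0 if and only if Z = E[Z|𝒢] μ-almost everywhere. -/
open MeasureTheory ProbabilityTheory

/-- Probabilistic content of Lemma 2: in the additive-noise model `Y = Z + ε`,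
the test statistic `E[(E[Y|ℱ] − E[Y|𝒢])²]` vanishes if and only if
`Z = E[Z|𝒢]` almost everywhere. -/
theorem drcfs_stmt9 {Ω : Type*} {m : MeasurableSpace Ω} (μ : Measure Ω) [IsProbabilityMeasure μ]
    (𝒢 ℱ : MeasurableSpace Ω) (h𝒢ℱ : 𝒢 ≤ ℱ) (hℱm : ℱ ≤ m)
    (Z : Ω → ℝ) (hZmeas : StronglyMeasurable[ℱ] Z) (hZ2 : MemLp Z 2 μ)
    (ε : Ω → ℝ) (hε2 : MemLp ε 2 μ)
    (hindep : Indep (MeasurableSpace.comap ε inferInstance) ℱ μ)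
    (Y : Ω → ℝ) (hYdef : Y = fun ω => Z ω + ε ω) :
    ∫ ω, ((μ[Y|ℱ]) ω - (μ[Y|𝒢]) ω) ^ 2 ∂μ = 0 ↔ Z =ᵐ[μ] (μ[Z|𝒢]) := by
  have h𝒢m : 𝒢 ≤ m := h𝒢ℱ.trans hℱm
  have hZint : Integrable Z μ := hZ2.integrable one_le_two
  have hεint : Integrable ε μ := hε2.integrable one_le_two
  -- a measurable modification of ε
  set ε' := hε2.1.mk ε with hε'def
  have hε'sm : StronglyMeasurable[m] ε' := hε2.1.stronglyMeasurable_mk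
  have hεε' : ε =ᵐ[μ] ε' := hε2.1.ae_eq_mk
  have hε'meascomap : Measurable[MeasurableSpace.comap ε' inferInstance] ε' :=
    Measurable.of_comap_le le_rfl
  have hε'msmcomap : StronglyMeasurable[MeasurableSpace.comap ε' inferInstance] ε' :=
    hε'meascomap.stronglyMeasurable
  -- independence transfers to ε'
  have hindep' : Indep (MeasurableSpace.comap ε' inferInstance) ℱ μ := by
    rw [Indep_iff] at hindep ⊢
    rintro t1 t2 ⟨s, hs, rfl⟩ ht2
    have h1 : (ε' ⁻¹' s : Set Ω) =ᵐ[μ] (ε ⁻¹' s : Set Ω) :=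
      hεε'.mono fun ω hω => by
        change (ε' ω ∈ s) = (ε ω ∈ s)
        rw [hω]
    calc μ (ε' ⁻¹' s ∩ t2) = μ (ε ⁻¹' s ∩ t2) :=
          measure_congr (h1.inter (Filter.EventuallyEq.refl _ _))
      _ = μ (ε ⁻¹' s) * μ t2 := hindep _ _ ⟨s, hs, rfl⟩ ht2
      _ = μ (ε' ⁻¹' s) * μ t2 := by rw [measure_congr h1]
  have hindep'' : Indep (MeasurableSpace.comap ε' inferInstance) 𝒢 μ := by
    rw [Indep_iff] at hindep' ⊢
    exact fun t1 t2 ht1 ht2 => hindep' t1 t2 ht1 (h𝒢ℱ _ ht2)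
  -- conditional expectations of ε are constant
  have hεF : μ[ε|ℱ] =ᵐ[μ] fun _ => ∫ x, ε x ∂μ := by
    refine (condExp_congr_ae hεε').trans ?_
    have h := condExp_indep_eq hε'sm.measurable.comap_le hℱm hε'msmcomap hindep'
    refine h.trans ?_
    rw [integral_congr_ae hεε']
  have hεG : μ[ε|𝒢] =ᵐ[μ] fun _ => ∫ x, ε x ∂μ := by
    refine (condExp_congr_ae hεε').trans ?_
    have h := condExp_indep_eq hε'sm.measurable.comap_le h𝒢m hε'msmcomap hindep''
    refine h.trans ?_
    rw [integral_congr_ae hεε']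
  -- conditional expectations of Y
  have hYF : μ[Y|ℱ] =ᵐ[μ] fun ω => Z ω + ∫ x, ε x ∂μ := by
    rw [hYdef]
    refine (condExp_add hZint hεint ℱ).trans ?_
    have h1 : μ[Z|ℱ] = Z := condExp_of_stronglyMeasurable hℱm hZmeas hZint
    filter_upwards [hεF] with ω hω
    simp [h1, hω]
  have hYG : μ[Y|𝒢] =ᵐ[μ] fun ω => (μ[Z|𝒢]) ω + ∫ x, ε x ∂μ := by
    rw [hYdef]
    refine (condExp_add hZint hεint 𝒢).trans ?_
    filter_upwards [hεG] with ω hω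
    simp [hω]
  -- the difference equals Z - E[Z|𝒢]
  have hDeq : (fun ω => ((μ[Y|ℱ]) ω - (μ[Y|𝒢]) ω) ^ 2) =ᵐ[μ]
      fun ω => (Z ω - (μ[Z|𝒢]) ω) ^ 2 := by
    filter_upwards [hYF, hYG] with ω h1 h2
    rw [h1, h2]; ring
  -- E[Z|𝒢] is in L²
  have hg2 : MemLp (μ[Z|𝒢]) 2 μ := by
    have heq : μ[Z|𝒢] =ᵐ[μ] ((condExpL2 ℝ ℝ h𝒢m (hZ2.toLp Z) : Lp ℝ 2 μ) : Ω → ℝ) := by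
      refine (ae_eq_condExp_of_forall_setIntegral_eq h𝒢m hZint
        (fun s _ hμs => integrableOn_condExpL2_of_measure_ne_top h𝒢m hμs.ne _)
        (fun s hs hμs => ?_) (aestronglyMeasurable_condExpL2 h𝒢m _)).symm
      rw [integral_condExpL2_eq h𝒢m (hZ2.toLp Z) hs hμs.ne]
      exact @setIntegral_congr_ae Ω ℝ m _ _ _ _ _ μ (h𝒢m s hs) (hZ2.coeFn_toLp.mono fun ω h _ => h)
    exact (Lp.memLp _).ae_eq heq.symm
  have hDint : Integrable (fun ω => (Z ω - (μ[Z|𝒢]) ω) ^ 2) μ :=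
    (hZ2.sub hg2).integrable_sq
  rw [integral_congr_ae hDeq,
    integral_eq_zero_iff_of_nonneg_ae (Filter.Eventually.of_forall fun ω => sq_nonneg _) hDint]
  constructor
  · intro h
    filter_upwards [h] with ω hω
    have : (Z ω - (μ[Z|𝒢]) ω) ^ 2 = 0 := hω
    have h0 : Z ω - (μ[Z|𝒢]) ω = 0 := by nlinarith [sq_nonneg (Z ω - (μ[Z|𝒢]) ω)]
    linarith
  · intro h
    filter_upwards [h] with ω hω
    simp [Pi.zero_apply, hω]
end

section
/- Let (Ω, m, μ) be a probability space, let ℱ ≤ m be a sub-σ-algebra, let Y : Ω → ℝ be square-integrable, and set g₀ = E[Y|ℱ]. Then for all ℱ-measurable square-integrable functions g, α : Ω → ℝ, we have E[Y·g + α·(Y − g)] − E[Y·g₀] = − E[(α − g₀)·(g − g₀)]. -/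
open MeasureTheory ProbabilityTheory

lemma drcfs_int_mul {Ω : Type*} {m : MeasurableSpace Ω} {μ : Measure Ω}
    {f g : Ω → ℝ} (hf : MemLp f 2 μ) (hg : MemLp g 2 μ) :
    Integrable (fun ω => f ω * g ω) μ := by
  exact hf.integrable_mul hg

lemma drcfs_memℒp_condexp {Ω : Type*} {ℱ : MeasurableSpace Ω} {m : MeasurableSpace Ω}
    {μ : Measure Ω} [IsProbabilityMeasure μ] (hℱm : ℱ ≤ m)
    {Y : Ω → ℝ} (hY : MemLp Y 2 μ) : MemLp (μ[Y|ℱ]) 2 μ := by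
  haveI : SigmaFinite (μ.trim hℱm) := IsFiniteMeasure.toSigmaFinite _
  set f : Lp ℝ 2 μ := hY.toLp Y with hf
  set F : Lp ℝ 2 μ := (condExpL2 ℝ ℝ hℱm f).val with hF
  have hae : ⇑F =ᵐ[μ] μ[Y|ℱ] := by
    refine ae_eq_condExp_of_forall_setIntegral_eq hℱm (hY.integrable one_le_two)
      (fun s _ _ => (integrable_condExpL2_of_isFiniteMeasure hℱm).integrableOn)
      (fun s hs hμs => ?_) (aestronglyMeasurable_condExpL2 hℱm f)
    rw [show (⇑F : Ω → ℝ) = (condExpL2 ℝ ℝ hℱm f : Ω → ℝ) from rfl,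
      integral_condExpL2_eq hℱm f hs hμs.ne]
    exact setIntegral_congr_ae (hℱm s hs) ((MemLp.coeFn_toLp hY).mono fun x hx _ => hx)
  exact (Lp.memLp F).ae_eq hae

lemma drcfs_key {Ω : Type*} {ℱ : MeasurableSpace Ω} {m : MeasurableSpace Ω}
    {μ : Measure Ω} [IsProbabilityMeasure μ] (hℱm : ℱ ≤ m)
    {Y f : Ω → ℝ} (hY : MemLp Y 2 μ) (hfm : StronglyMeasurable[ℱ] f)
    (hf2 : MemLp f 2 μ) :
    ∫ ω, f ω * Y ω ∂μ = ∫ ω, f ω * (μ[Y|ℱ]) ω ∂μ := by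
  haveI : SigmaFinite (μ.trim hℱm) := IsFiniteMeasure.toSigmaFinite _
  have h1 : Integrable (f * Y) μ := by
    exact drcfs_int_mul hf2 hY
  have h2 := condExp_mul_of_stronglyMeasurable_left (μ := μ) hfm h1 (hY.integrable one_le_two)
  have h3 : ∫ ω, (f * Y) ω ∂μ = ∫ ω, (μ[f * Y|ℱ]) ω ∂μ := (integral_condExp hℱm).symm
  have h4 : ∫ ω, (μ[f * Y|ℱ]) ω ∂μ = ∫ ω, (f * μ[Y|ℱ]) ω ∂μ := integral_congr_ae h2
  simpa [Pi.mul_apply] using h3.trans h4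

lemma drcfs_master {Ω : Type*} {ℱ : MeasurableSpace Ω} {m : MeasurableSpace Ω}
    (μ : Measure Ω) [IsProbabilityMeasure μ] (hℱm : ℱ ≤ m)
    (Y : Ω → ℝ) (hY : MemLp Y 2 μ)
    (g α : Ω → ℝ) (hgmeas : StronglyMeasurable[ℱ] g) (hαmeas : StronglyMeasurable[ℱ] α)
    (hg2 : MemLp g 2 μ) (hα2 : MemLp α 2 μ) :
    ∫ ω, (Y ω * g ω + α ω * (Y ω - g ω)) ∂μ - ∫ ω, Y ω * (μ[Y|ℱ]) ω ∂μ
      = - ∫ ω, (α ω - (μ[Y|ℱ]) ω) * (g ω - (μ[Y|ℱ]) ω) ∂μ := by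
  haveI : SigmaFinite (μ.trim hℱm) := IsFiniteMeasure.toSigmaFinite _
  set G := μ[Y|ℱ] with hG
  have hG2 : MemLp G 2 μ := drcfs_memℒp_condexp hℱm hY
  have hGmeas : StronglyMeasurable[ℱ] G := stronglyMeasurable_condExp
  -- integrabilities
  have iYg : Integrable (fun ω => Y ω * g ω) μ := drcfs_int_mul hY hg2
  have iαY : Integrable (fun ω => α ω * Y ω) μ := drcfs_int_mul hα2 hY
  have iαg : Integrable (fun ω => α ω * g ω) μ := drcfs_int_mul hα2 hg2
  have iYG : Integrable (fun ω => Y ω * G ω) μ := drcfs_int_mul hY hG2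
  have iαG : Integrable (fun ω => α ω * G ω) μ := drcfs_int_mul hα2 hG2
  have igG : Integrable (fun ω => G ω * g ω) μ := drcfs_int_mul hG2 hg2
  have iGG : Integrable (fun ω => G ω * G ω) μ := drcfs_int_mul hG2 hG2
  -- key identities
  have k1 : ∫ ω, g ω * Y ω ∂μ = ∫ ω, g ω * G ω ∂μ := drcfs_key hℱm hY hgmeas hg2
  have k2 : ∫ ω, α ω * Y ω ∂μ = ∫ ω, α ω * G ω ∂μ := drcfs_key hℱm hY hαmeas hα2
  have k3 : ∫ ω, G ω * Y ω ∂μ = ∫ ω, G ω * G ω ∂μ := drcfs_key hℱm hY hGmeas hG2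
  have e1 : ∫ ω, (Y ω * g ω + α ω * (Y ω - g ω)) ∂μ
      = ∫ ω, Y ω * g ω ∂μ + ∫ ω, α ω * Y ω ∂μ - ∫ ω, α ω * g ω ∂μ := by
    have h1 : Integrable (fun ω => α ω * Y ω - α ω * g ω) μ := iαY.sub iαg
    simp_rw [mul_sub]
    rw [integral_add iYg h1, integral_sub iαY iαg, add_sub_assoc]
  have e2 : ∫ ω, (α ω - G ω) * (g ω - G ω) ∂μ
      = ∫ ω, α ω * g ω ∂μ - ∫ ω, α ω * G ω ∂μ - ∫ ω, G ω * g ω ∂μ + ∫ ω, G ω * G ω ∂μ := by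
    have h1 : Integrable (fun ω => α ω * g ω - α ω * G ω) μ := iαg.sub iαG
    have h2 : Integrable (fun ω => G ω * g ω - G ω * G ω) μ := igG.sub iGG
    simp_rw [sub_mul, mul_sub]
    rw [integral_sub h1 h2, integral_sub iαg iαG, integral_sub igG iGG]
    ring
  have cY : ∫ ω, Y ω * g ω ∂μ = ∫ ω, g ω * Y ω ∂μ := by congr 1; ext ω; ring
  have cYG : ∫ ω, Y ω * G ω ∂μ = ∫ ω, G ω * Y ω ∂μ := by congr 1; ext ω; ring
  have cgG : ∫ ω, g ω * G ω ∂μ = ∫ ω, G ω * g ω ∂μ := by congr 1; ext ω; ring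
  rw [e1, e2, cY, cYG, k1, k2, k3, cgG]
  ring

/-- Mixed Bias Property of the debiased score for the moment functional `m₀(V; g) = Y·g`:
with `g₀ = E[Y|ℱ]`, for all `ℱ`-measurable square-integrable `g, α`,
`E[Y·g + α·(Y − g)] − E[Y·g₀] = − E[(α − g₀)·(g − g₀)]`. -/
theorem drcfs_stmt11 {Ω : Type*} {m : MeasurableSpace Ω} (μ : Measure Ω) [IsProbabilityMeasure μ]
    (ℱ : MeasurableSpace Ω) (hℱm : ℱ ≤ m)
    (Y : Ω → ℝ) (hY : MemLp Y 2 μ)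
    (g α : Ω → ℝ) (hgmeas : StronglyMeasurable[ℱ] g) (hαmeas : StronglyMeasurable[ℱ] α)
    (hg2 : MemLp g 2 μ) (hα2 : MemLp α 2 μ) :
    ∫ ω, (Y ω * g ω + α ω * (Y ω - g ω)) ∂μ - ∫ ω, Y ω * (μ[Y|ℱ]) ω ∂μ
      = - ∫ ω, (α ω - (μ[Y|ℱ]) ω) * (g ω - (μ[Y|ℱ]) ω) ∂μ :=
  drcfs_master μ hℱm Y hY g α hgmeas hαmeas hg2 hα2
end

section
/- Let (Ω, m, μ) be a probability space, let ℱ ≤ m be a sub-σ-algebra, let Y : Ω → ℝ be square-integrable, and set g₀ = E[Y|ℱ]. Then for all ℱ-measurable square-integrable functions g, α : Ω → ℝ, we have |E[Y·g + α·(Y − g)] − E[Y·g₀]| ≤ ‖α − g₀‖_{L²(μ)} · ‖g − g₀‖_{L²(μ)}. -/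
open MeasureTheory ProbabilityTheory

lemma drcfs_aux_mul_int {Ω : Type*} {m : MeasurableSpace Ω} {μ : Measure Ω}
    {f h : Ω → ℝ} (hf : MemLp f 2 μ) (hh : MemLp h 2 μ) :
    Integrable (fun ω => f ω * h ω) μ := by
  have : MemLp (f • h) 1 μ :=
    hh.smul hf
  rw [← memLp_one_iff_integrable]
  exact this

/-- Cauchy–Schwarz for integrals of products of L² functions. -/
lemma drcfs_aux_cs {Ω : Type*} {m : MeasurableSpace Ω} {μ : Measure Ω}
    {u v : Ω → ℝ} (hu : MemLp u 2 μ) (hv : MemLp v 2 μ) :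
    |∫ ω, u ω * v ω ∂μ| ≤ (eLpNorm u 2 μ).toReal * (eLpNorm v 2 μ).toReal := by
  set U := hu.toLp _ with hU
  set V := hv.toLp _ with hV
  have hinner : (inner ℝ U V : ℝ) = ∫ ω, u ω * v ω ∂μ := by
    have h0 : (inner ℝ U V : ℝ) = ∫ ω, (inner ℝ (U ω) (V ω) : ℝ) ∂μ := L2.inner_def U V
    rw [h0]
    refine integral_congr_ae ?_
    filter_upwards [hu.coeFn_toLp, hv.coeFn_toLp] with ω h1 h2
    simp [hU, hV, h1, h2, RCLike.inner_apply, conj_trivial, mul_comm]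
  calc |∫ ω, u ω * v ω ∂μ| = |(inner ℝ U V : ℝ)| := by rw [hinner]
    _ ≤ ‖U‖ * ‖V‖ := abs_real_inner_le_norm U V
    _ = (eLpNorm u 2 μ).toReal * (eLpNorm v 2 μ).toReal := by
      rw [hU, hV, Lp.norm_toLp, Lp.norm_toLp]

/-- `μ[Y|ℱ]` is in L² when `Y` is. -/
lemma drcfs_aux_condexp_memℒp {Ω : Type*} (ℱ : MeasurableSpace Ω) {m : MeasurableSpace Ω}
    (hℱm : ℱ ≤ m) (μ : Measure Ω) [IsProbabilityMeasure μ]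
    {Y : Ω → ℝ} (hY : MemLp Y 2 μ) : MemLp (μ[Y|ℱ]) 2 μ := by
  set CL := condExpL2 ℝ ℝ hℱm (hY.toLp Y) with hCL
  have h_ae : (CL.1 : Ω → ℝ) =ᵐ[μ] μ[Y|ℱ] := by
    refine ae_eq_condExp_of_forall_setIntegral_eq hℱm (hY.integrable one_le_two) ?_ ?_ ?_
    · intro s _ _
      exact ((Lp.memLp CL.1).integrable one_le_two).integrableOn
    · intro s hs hμs
      have h1 : ∫ x in s, (CL.1 : Ω → ℝ) x ∂μ = ∫ x in s, (hY.toLp Y : Ω → ℝ) x ∂μ :=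
        integral_condExpL2_eq hℱm (hY.toLp Y) hs hμs.ne
      have h2 : ∫ x in s, (hY.toLp Y : Ω → ℝ) x ∂μ = ∫ x in s, Y x ∂μ :=
        setIntegral_congr_ae (hℱm s hs) ((hY.coeFn_toLp).mono fun x hx _ => hx)
      rw [h1, h2]
    · exact aestronglyMeasurable_condExpL2 hℱm (hY.toLp Y)
  exact (Lp.memLp CL.1).ae_eq h_ae

/-- Doubly-robust bias bound: with `g₀ = E[Y|ℱ]`, for all `ℱ`-measurable square-integrable
`g, α`, `|E[Y·g + α·(Y − g)] − E[Y·g₀]| ≤ ‖α − g₀‖_{L²(μ)} · ‖g − g₀‖_{L²(μ)}`. -/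
theorem drcfs_stmt12 {Ω : Type*} {m : MeasurableSpace Ω} (μ : Measure Ω) [IsProbabilityMeasure μ]
    (ℱ : MeasurableSpace Ω) (hℱm : ℱ ≤ m)
    (Y : Ω → ℝ) (hY : MemLp Y 2 μ)
    (g α : Ω → ℝ) (hgmeas : StronglyMeasurable[ℱ] g) (hαmeas : StronglyMeasurable[ℱ] α)
    (hg2 : MemLp g 2 μ) (hα2 : MemLp α 2 μ) :
    |∫ ω, (Y ω * g ω + α ω * (Y ω - g ω)) ∂μ - ∫ ω, Y ω * (μ[Y|ℱ]) ω ∂μ|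
      ≤ (eLpNorm (fun ω => α ω - (μ[Y|ℱ]) ω) 2 μ).toReal
          * (eLpNorm (fun ω => g ω - (μ[Y|ℱ]) ω) 2 μ).toReal := by
  set g₀ : Ω → ℝ := μ[Y|ℱ] with hg₀def
  have hg₀2 : MemLp g₀ 2 μ := drcfs_aux_condexp_memℒp ℱ hℱm μ hY
  have hYint : Integrable Y μ := hY.integrable one_le_two
  have hg₀m : StronglyMeasurable[ℱ] g₀ := stronglyMeasurable_condExp
  -- tower property: ∫ f·Y = ∫ f·g₀ for ℱ-measurable L² f
  have key : ∀ f : Ω → ℝ, StronglyMeasurable[ℱ] f → MemLp f 2 μ →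
      ∫ ω, f ω * Y ω ∂μ = ∫ ω, f ω * g₀ ω ∂μ := by
    intro f hfm hf2
    have h1 : Integrable (f * Y) μ := drcfs_aux_mul_int hf2 hY
    have h2 : (μ[f * Y|ℱ]) =ᵐ[μ] f * μ[Y|ℱ] :=
      condExp_mul_of_stronglyMeasurable_left hfm h1 hYint
    calc ∫ ω, f ω * Y ω ∂μ = ∫ ω, (f * Y) ω ∂μ := rfl
      _ = ∫ ω, (μ[f * Y|ℱ]) ω ∂μ := (integral_condExp hℱm (f := f * Y)).symm
      _ = ∫ ω, (f * μ[Y|ℱ]) ω ∂μ := integral_congr_ae h2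
      _ = ∫ ω, f ω * g₀ ω ∂μ := rfl
  -- integrability of the various products
  have iYg : Integrable (fun ω => Y ω * g ω) μ := drcfs_aux_mul_int hY hg2
  have iαY : Integrable (fun ω => α ω * Y ω) μ := drcfs_aux_mul_int hα2 hY
  have iαg : Integrable (fun ω => α ω * g ω) μ := drcfs_aux_mul_int hα2 hg2
  have iYg₀ : Integrable (fun ω => Y ω * g₀ ω) μ := drcfs_aux_mul_int hY hg₀2
  have hu : MemLp (fun ω => α ω - g₀ ω) 2 μ := hα2.sub hg₀2
  have hv : MemLp (fun ω => g ω - g₀ ω) 2 μ := hg2.sub hg₀2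
  have huv : Integrable (fun ω => (α ω - g₀ ω) * (g ω - g₀ ω)) μ := drcfs_aux_mul_int hu hv
  have iL : Integrable (fun ω => Y ω * g ω + α ω * (Y ω - g ω)) μ := by
    refine (iYg.add (iαY.sub iαg)).congr ?_
    exact Filter.Eventually.of_forall fun ω => by simp; ring
  -- the orthogonality step
  have hf2 : MemLp (fun ω => g ω + α ω - g₀ ω) 2 μ := (hg2.add hα2).sub hg₀2
  have hfm : StronglyMeasurable[ℱ] (fun ω => g ω + α ω - g₀ ω) :=
    (hgmeas.add hαmeas).sub hg₀m
  have hzero : ∫ ω, (g ω + α ω - g₀ ω) * (Y ω - g₀ ω) ∂μ = 0 := by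
    have e1 : ∫ ω, (g ω + α ω - g₀ ω) * (Y ω - g₀ ω) ∂μ
        = (∫ ω, (g ω + α ω - g₀ ω) * Y ω ∂μ) - ∫ ω, (g ω + α ω - g₀ ω) * g₀ ω ∂μ := by
      rw [← integral_sub (drcfs_aux_mul_int hf2 hY) (drcfs_aux_mul_int hf2 hg₀2)]
      exact integral_congr_ae (Filter.Eventually.of_forall fun ω => by ring)
    rw [e1, key _ hfm hf2, sub_self]
  -- the bias identity
  have hbias : ∫ ω, (Y ω * g ω + α ω * (Y ω - g ω)) ∂μ - ∫ ω, Y ω * g₀ ω ∂μ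
      = -∫ ω, (α ω - g₀ ω) * (g ω - g₀ ω) ∂μ := by
    have eA : ∫ ω, (Y ω * g ω + α ω * (Y ω - g ω) - Y ω * g₀ ω) ∂μ
        = (∫ ω, (Y ω * g ω + α ω * (Y ω - g ω)) ∂μ) - ∫ ω, Y ω * g₀ ω ∂μ :=
      integral_sub iL iYg₀
    have eB : ∫ ω, ((Y ω * g ω + α ω * (Y ω - g ω) - Y ω * g₀ ω)
          + (α ω - g₀ ω) * (g ω - g₀ ω)) ∂μ
        = (∫ ω, (Y ω * g ω + α ω * (Y ω - g ω) - Y ω * g₀ ω) ∂μ)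
          + ∫ ω, (α ω - g₀ ω) * (g ω - g₀ ω) ∂μ :=
      integral_add (iL.sub iYg₀) huv
    have eC : ∫ ω, ((Y ω * g ω + α ω * (Y ω - g ω) - Y ω * g₀ ω)
          + (α ω - g₀ ω) * (g ω - g₀ ω)) ∂μ
        = ∫ ω, (g ω + α ω - g₀ ω) * (Y ω - g₀ ω) ∂μ :=
      integral_congr_ae (Filter.Eventually.of_forall fun ω => by ring)
    rw [eC, hzero] at eB
    linarith
  rw [hbias, abs_neg]
  exact drcfs_aux_cs hu hv
end

section
/- Let γ₁ = N(0,1) ⊗ N(0,1) be the product of two standard real Gaussian measures on ℝ × ℝ, and let γ₂ = N(0,2) ⊗ N(0,1/2) be the product of a centered real Gaussian with variance 2 and a centered real Gaussian with variance 1/2. Then the pushforward of γ₁ under the map (n, e) ↦ (n, n + e) equals the pushforward of γ₂ under the map (e, n) ↦ (e/2 + n, e), as measures on ℝ × ℝ. -/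
open MeasureTheory ProbabilityTheory

open Real in

noncomputable def Teq : (ℝ × ℝ) ≃ᵐ (ℝ × ℝ) where
  toFun p := (p.1 + p.2, (p.1 - p.2) / 2)
  invFun q := (q.1 / 2 + q.2, q.1 / 2 - q.2)
  left_inv p := by simp only [Prod.ext_iff]; constructor <;> ring
  right_inv q := by simp only [Prod.ext_iff]; constructor <;> ring
  measurable_toFun := by measurability
  measurable_invFun := by measurability

noncomputable def Tlin : (ℝ × ℝ) →ₗ[ℝ] (ℝ × ℝ) where
  toFun p := (p.1 + p.2, (p.1 - p.2) / 2)
  map_add' x y := by simp only [Prod.ext_iff]; constructor <;> simp <;> ring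
  map_smul' c x := by simp only [Prod.ext_iff]; constructor <;> simp [smul_eq_mul] <;> ring

lemma Tlin_det : LinearMap.det Tlin = -1 := by
  rw [← LinearMap.det_toMatrix (Module.Basis.finTwoProd ℝ) Tlin, Matrix.det_fin_two]
  simp only [LinearMap.toMatrix_apply, Tlin, Module.Basis.coe_finTwoProd_repr, Module.Basis.finTwoProd_zero,
    Module.Basis.finTwoProd_one, LinearMap.coe_mk, AddHom.coe_mk]
  norm_num

lemma vol_map_Teq : (volume : Measure (ℝ × ℝ)).map Teq = volume := by
  have h := Measure.map_linearMap_addHaar_eq_smul_addHaar (volume : Measure (ℝ × ℝ))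
    (f := Tlin) (by rw [Tlin_det]; norm_num)
  rw [Tlin_det] at h
  have : ⇑Teq = ⇑Tlin := rfl
  rw [this]
  simp only [abs_inv, abs_neg, abs_one, inv_one, ENNReal.ofReal_one, one_smul] at h
  exact h

lemma pdf_id (x y : ℝ) :
    gaussianPDFReal 0 1 (x / 2 + y) * gaussianPDFReal 0 1 (x / 2 - y)
      = gaussianPDFReal 0 2 x * gaussianPDFReal 0 (1 / 2) y := by
  simp only [gaussianPDFReal]
  rw [mul_mul_mul_comm, ← Real.exp_add, mul_mul_mul_comm, ← Real.exp_add,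
    ← mul_inv, ← mul_inv, ← Real.sqrt_mul (by positivity), ← Real.sqrt_mul (by positivity)]
  congr 2
  · push_cast; ring
  · push_cast; ring

lemma map_withDensity_equiv {α β : Type*} [MeasurableSpace α] [MeasurableSpace β]
    (μ : Measure α) (e : α ≃ᵐ β) (f : α → ENNReal) (hf : Measurable f) :
    (μ.withDensity f).map e = (μ.map e).withDensity (f ∘ e.symm) := by
  ext s hs
  rw [Measure.map_apply e.measurable hs,
    withDensity_apply _ (e.measurable hs),
    withDensity_apply _ hs,
    setLIntegral_map hs (hf.comp e.symm.measurable) e.measurable]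
  simp

lemma prod_gaussian_eq (a b : NNReal) (ha : a ≠ 0) (hb : b ≠ 0) :
    (gaussianReal 0 a).prod (gaussianReal 0 b)
      = (volume.prod volume).withDensity
          (fun p : ℝ × ℝ => gaussianPDF 0 a p.1 * gaussianPDF 0 b p.2) := by
  refine (Measure.prod_eq fun s t hs ht => ?_)
  rw [withDensity_apply _ (hs.prod ht), ← Measure.prod_restrict,
    lintegral_prod_mul (measurable_gaussianPDF 0 a).aemeasurable
      (measurable_gaussianPDF 0 b).aemeasurable,
    gaussianReal_apply 0 ha s, gaussianReal_apply 0 hb t,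
    ← withDensity_apply _ hs, ← withDensity_apply _ ht]

lemma key : ((gaussianReal 0 1).prod (gaussianReal 0 1)).map Teq
    = (gaussianReal 0 2).prod (gaussianReal 0 (1 / 2)) := by
  rw [prod_gaussian_eq 1 1 one_ne_zero one_ne_zero,
    prod_gaussian_eq 2 (1 / 2) (by norm_num) (by norm_num),
    map_withDensity_equiv _ Teq (fun p : ℝ × ℝ => gaussianPDF 0 1 p.1 * gaussianPDF 0 1 p.2)
      (((measurable_gaussianPDF 0 1).comp measurable_fst).mul
        ((measurable_gaussianPDF 0 1).comp measurable_snd)),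
    ← Measure.volume_eq_prod, vol_map_Teq, Measure.volume_eq_prod]
  congr 1
  funext q
  show gaussianPDF 0 1 (q.1 / 2 + q.2) * gaussianPDF 0 1 (q.1 / 2 - q.2)
      = gaussianPDF 0 2 q.1 * gaussianPDF 0 (1 / 2) q.2
  simp only [gaussianPDF]
  rw [← ENNReal.ofReal_mul (gaussianPDFReal_nonneg _ _ _),
    ← ENNReal.ofReal_mul (gaussianPDFReal_nonneg _ _ _), pdf_id]


/-- Example 2 of the paper (necessity of Axiom (C)): the law of `(N, N + ε)` with
`N, ε` i.i.d. `N(0,1)` equals the law of `(ε/2 + N, ε)` with `ε ~ N(0,2)` and `N ~ N(0,1/2)`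
independent. -/
theorem drcfs_stmt14 :
    ((gaussianReal 0 1).prod (gaussianReal 0 1)).map (fun p : ℝ × ℝ => (p.1, p.1 + p.2))
      = ((gaussianReal 0 2).prod (gaussianReal 0 (1 / 2))).map
          (fun p : ℝ × ℝ => (p.1 / 2 + p.2, p.1)) := by
  rw [← key, Measure.map_map (by measurability) Teq.measurable]
  congr 1
  funext p
  show (p.1, p.1 + p.2) = ((p.1 + p.2) / 2 + (p.1 - p.2) / 2, p.1 + p.2)
  simp only [Prod.mk.injEq]
  exact ⟨by ring, trivial⟩
end
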